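/- For every real q > 1 and every real t with |t| < q, the series Σ_{n≥1} (t^n/n)·q^n/(q^n−1)^2 converges absolutely, the infinite product Π_{m≥1} (1 − q^{−m} t)^m converges, and exp( − Σ_{n≥1} (t^n/n)·q^n/(q^n−1)^2 ) = Π_{m≥1} (1 − q^{−m} t)^m. -/

import Mathlib

open Real

set_option maxHeartbeats 2000000 in
theorem exp_neg_tsum_eq_tprod (q t : ℝ) (hq : 1 < q) (ht : |t| < q) :
    Summable (fun n : ℕ =>
      |t ^ (n + 1) / ((n : ℝ) + 1) * (q ^ (n + 1) / (q ^ (n + 1) - 1) ^ 2)|) ∧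
    Multipliable (fun m : ℕ => (1 - t / q ^ (m + 1)) ^ (m + 1)) ∧
    Real.exp (-∑' n : ℕ,
        t ^ (n + 1) / ((n : ℝ) + 1) * (q ^ (n + 1) / (q ^ (n + 1) - 1) ^ 2)) =
      ∏' m : ℕ, (1 - t / q ^ (m + 1)) ^ (m + 1) := by
  have hq0 : (0:ℝ) < q := lt_trans one_pos hq
  have hqpow : ∀ k : ℕ, (0:ℝ) < q ^ k := fun k => pow_pos hq0 k
  -- |t / q^(m+1)| < 1
  have hxabs : ∀ m : ℕ, |t / q ^ (m + 1)| < 1 := by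
    intro m
    rw [abs_div, abs_pow, abs_of_pos hq0, div_lt_one (hqpow (m+1))]
    calc |t| < q := ht
    _ ≤ q ^ (m+1) := le_self_pow₀ hq.le (Nat.succ_ne_zero m)
  have hxpos : ∀ m : ℕ, (0:ℝ) < 1 - t / q ^ (m + 1) := by
    intro m
    have := (abs_lt.mp (hxabs m)).2
    linarith
  -- the double-indexed family
  set f : ℕ × ℕ → ℝ := fun p => ((p.1 : ℝ) + 1) * ((t / q ^ (p.1 + 1)) ^ (p.2 + 1) / ((p.2 : ℝ) + 1)) with hfdef
  -- absolute summability of f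
  have habs : Summable fun p : ℕ × ℕ => |f p| := by
    have hr : |t| / q < 1 := (div_lt_one hq0).mpr ht
    have hr0 : (0:ℝ) ≤ |t| / q := div_nonneg (abs_nonneg t) hq0.le
    have hs0 : (0:ℝ) ≤ 1 / q := by positivity
    have hs1 : 1 / q < 1 := by rw [div_lt_one hq0]; exact hq
    have hA : Summable fun m : ℕ => ((m : ℝ) + 1) * (1 / q) ^ m := by
      have h1 : Summable fun m : ℕ => (m : ℝ) * (1 / q) ^ m :=
        (hasSum_coe_mul_geometric_of_norm_lt_one (by rwa [Real.norm_eq_abs, abs_of_nonneg hs0])).summable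
      have h2 : Summable fun m : ℕ => (1 / q) ^ m := summable_geometric_of_lt_one hs0 hs1
      simpa [add_mul] using h1.add h2
    have hB : Summable fun n : ℕ => (|t| / q) ^ (n + 1) :=
      (summable_geometric_of_lt_one hr0 hr).comp_injective (add_left_injective 1)
    refine ((hA.mul_of_nonneg hB ?_ ?_).of_nonneg_of_le (fun p => abs_nonneg _) ?_)
    · intro m; positivity
    · intro n; positivity
    · rintro ⟨m, n⟩
      have h1 : |f (m, n)| = ((m : ℝ) + 1) * ((|t| / q ^ (m + 1)) ^ (n + 1) / ((n : ℝ) + 1)) := by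
        simp [hfdef, abs_mul, abs_div, abs_pow, abs_of_pos (hqpow (m+1)),
          abs_of_nonneg (by positivity : (0:ℝ) ≤ (m:ℝ)+1),
          abs_of_nonneg (by positivity : (0:ℝ) ≤ (n:ℝ)+1)]
      rw [h1]
      have h2 : (|t| / q ^ (m + 1)) ^ (n + 1) ≤ (1 / q) ^ m * (|t| / q) ^ (n + 1) := by
        have e1 : |t| / q ^ (m + 1) = (|t| / q) * (1 / q) ^ m := by
          rw [pow_succ']
          field_simp
          rw [mul_assoc, ← mul_pow, mul_one_div_cancel hq0.ne', one_pow, mul_one]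
        rw [e1, mul_pow, mul_comm]
        refine mul_le_mul_of_nonneg_right ?_ (by positivity)
        calc ((1 / q) ^ m) ^ (n + 1) ≤ ((1 / q) ^ m) ^ 1 :=
              pow_le_pow_of_le_one (by positivity) (pow_le_one₀ hs0 hs1.le) (by omega)
        _ = (1 / q) ^ m := pow_one _
      calc ((m : ℝ) + 1) * ((|t| / q ^ (m + 1)) ^ (n + 1) / ((n : ℝ) + 1))
          ≤ ((m : ℝ) + 1) * (|t| / q ^ (m + 1)) ^ (n + 1) := by
            refine mul_le_mul_of_nonneg_left ?_ (by positivity)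
            rw [div_le_iff₀ (by positivity)]
            nlinarith [pow_nonneg (by positivity : (0:ℝ) ≤ |t| / q ^ (m+1)) (n+1), (Nat.cast_nonneg n : (0:ℝ) ≤ n)]
      _ ≤ ((m : ℝ) + 1) * ((1 / q) ^ m * (|t| / q) ^ (n + 1)) :=
            mul_le_mul_of_nonneg_left h2 (by positivity)
      _ = ((m : ℝ) + 1) * (1 / q) ^ m * (|t| / q) ^ (n + 1) := by ring
  have hf : Summable f := habs.of_abs
  set S : ℝ := ∑' p : ℕ × ℕ, f p with hSdef
  have hS : HasSum f S := hf.hasSum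
  -- fiberwise sums over n, for fixed m
  have hm : ∀ m : ℕ, HasSum (fun n => f (m, n)) (((m : ℝ) + 1) * (-Real.log (1 - t / q ^ (m + 1)))) := by
    intro m
    exact (Real.hasSum_pow_div_log_of_abs_lt_one (hxabs m)).mul_left _
  have hM : HasSum (fun m : ℕ => ((m : ℝ) + 1) * (-Real.log (1 - t / q ^ (m + 1)))) S :=
    hS.prod_fiberwise hm
  -- fiberwise sums over m, for fixed n
  have hn : ∀ n : ℕ, HasSum (fun m => f (m, n))
      (t ^ (n + 1) / ((n : ℝ) + 1) * (q ^ (n + 1) / (q ^ (n + 1) - 1) ^ 2)) := by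
    intro n
    set c : ℝ := (q ^ (n + 1))⁻¹ with hcdef
    have hQ1 : (1:ℝ) < q ^ (n + 1) := one_lt_pow₀ hq (Nat.succ_ne_zero n)
    have hc1 : ‖c‖ < 1 := by
      rw [Real.norm_eq_abs, abs_of_pos (by positivity), hcdef, inv_lt_one_iff₀]
      right; exact hQ1
    have h0 : HasSum (fun m : ℕ => (m : ℝ) * c ^ m) (c / (1 - c) ^ 2) :=
      hasSum_coe_mul_geometric_of_norm_lt_one hc1
    have h1 : HasSum (fun m : ℕ => ((m : ℝ) + 1) * c ^ (m + 1))
        (c / (1 - c) ^ 2 - ∑ i ∈ Finset.range 1, (i : ℝ) * c ^ i) := by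
      exact ((hasSum_nat_add_iff' 1).mpr h0).congr_fun fun m => by push_cast; ring
    have h1' : HasSum (fun m : ℕ => ((m : ℝ) + 1) * c ^ (m + 1)) (c / (1 - c) ^ 2) := by
      simpa using h1
    have h2 := h1'.mul_left (t ^ (n + 1) / ((n : ℝ) + 1))
    have heq : ∀ m : ℕ, t ^ (n + 1) / ((n : ℝ) + 1) * (((m : ℝ) + 1) * c ^ (m + 1)) = f (m, n) := by
      intro m
      have : (t / q ^ (m + 1)) ^ (n + 1) = t ^ (n + 1) * c ^ (m + 1) := by
        rw [div_pow, hcdef, ← pow_mul, inv_pow, ← pow_mul, Nat.mul_comm]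
        ring
      simp only [hfdef, this]
      field_simp
    have hval : t ^ (n + 1) / ((n : ℝ) + 1) * (c / (1 - c) ^ 2)
        = t ^ (n + 1) / ((n : ℝ) + 1) * (q ^ (n + 1) / (q ^ (n + 1) - 1) ^ 2) := by
      congr 1
      rw [hcdef]
      have hQ0 : q ^ (n + 1) ≠ 0 := (hqpow (n+1)).ne'
      have hQ1' : q ^ (n + 1) - 1 ≠ 0 := by linarith
      field_simp
    rw [hval] at h2
    exact h2.congr_fun fun m => (heq m).symm
  have hSswap : HasSum (fun p : ℕ × ℕ => f (p.2, p.1)) S :=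
    (Equiv.prodComm ℕ ℕ).hasSum_iff.mpr hS
  have hN : HasSum (fun n : ℕ => t ^ (n + 1) / ((n : ℝ) + 1) * (q ^ (n + 1) / (q ^ (n + 1) - 1) ^ 2)) S :=
    hSswap.prod_fiberwise hn
  -- first conjunct
  have habsS : Summable fun p : ℕ × ℕ => |f (p.1, p.2)| := habs
  have habsswap : Summable fun p : ℕ × ℕ => |f (p.2, p.1)| :=
    (Equiv.prodComm ℕ ℕ).summable_iff.mpr habs
  have hT : HasSum (fun n : ℕ => ∑' m : ℕ, |f (m, n)|) (∑' p : ℕ × ℕ, |f (p.2, p.1)|) :=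
    habsswap.hasSum.prod_fiberwise fun n => (habsswap.prod_factor n).hasSum
  have conj1 : Summable (fun n : ℕ =>
      |t ^ (n + 1) / ((n : ℝ) + 1) * (q ^ (n + 1) / (q ^ (n + 1) - 1) ^ 2)|) := by
    refine hT.summable.of_nonneg_of_le (fun n => abs_nonneg _) (fun n => ?_)
    rw [← (hn n).tsum_eq]
    simpa [Real.norm_eq_abs] using norm_tsum_le_tsum_norm (f := fun m => f (m, n))
      (by simpa [Real.norm_eq_abs] using (habsswap.prod_factor n))
  -- the product
  have hlog : HasSum (fun m : ℕ => ((m : ℝ) + 1) * Real.log (1 - t / q ^ (m + 1))) (-S) := by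
    simpa [mul_neg] using hM.neg
  have hprod : HasProd (fun m : ℕ => (1 - t / q ^ (m + 1)) ^ (m + 1)) (Real.exp (-S)) := by
    have h := hlog.rexp
    refine h.congr_fun fun m => ?_
    have : ((m : ℝ) + 1) = ((m + 1 : ℕ) : ℝ) := by push_cast; ring
    rw [Function.comp_apply, this, Real.exp_nat_mul, Real.exp_log (hxpos m)]
  refine ⟨conj1, hprod.multipliable, ?_⟩
  rw [hN.tsum_eq, hprod.tprod_eq]
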